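/- Let γ ∈ (0,1) be real and set ε = γ²/4. There exists d₀ = d₀(γ) > 0 such that for every real d > d₀, with λ = (1−γ)·e/d and f_Δ(a) = 1/(1 + λ·a^Δ) on (0,1], every a* ∈ (0,1] satisfying f_{(1−ε)d}(f_{(1+ε)d}(a*)) = a* satisfies a* ≥ 1 − 1/((1+ε)·d). -/

import Mathlib

/-- `x - x² ≤ log (1+x)` for `x ≥ 0`. -/
lemma aux_log_lb {x : ℝ} (hx : 0 ≤ x) : x - x ^ 2 ≤ Real.log (1 + x) := by
  have h1 : (0:ℝ) < 1 + x := by linarith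
  have h2 := Real.log_le_sub_one_of_pos (show (0:ℝ) < (1 + x)⁻¹ by positivity)
  rw [Real.log_inv] at h2
  have hinv : (1 + x) * (1 + x)⁻¹ = 1 := mul_inv_cancel₀ h1.ne'
  have h5 : (0:ℝ) ≤ (1 + x)⁻¹ - (1 - x) := by nlinarith
  nlinarith [mul_nonneg hx h5]

/-- `log (1-x) ≤ -x - x²/2` for `0 ≤ x < 1`. -/
lemma aux_log_one_sub {x : ℝ} (h0 : 0 ≤ x) (h1 : x < 1) :
    Real.log (1 - x) ≤ -x - x ^ 2 / 2 := by
  rcases eq_or_lt_of_le h0 with rfl | h0'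
  · simp
  set f : ℝ → ℝ := fun y => -y - y ^ 2 / 2 - Real.log (1 - y) with hf
  have hder : ∀ y ∈ Set.Ioo (0:ℝ) x, HasDerivAt f (-1 - (2 * y ^ 1) / 2 - (1 - y)⁻¹ * (-1)) y := by
    intro y hy
    have hy1 : (1:ℝ) - y ≠ 0 := by have := hy.2; intro h; nlinarith
    have H1 : HasDerivAt (fun t : ℝ => 1 - t) (-1) y := (hasDerivAt_id y).const_sub 1
    have H2 : HasDerivAt (fun t : ℝ => Real.log (1 - t)) ((1 - y)⁻¹ * (-1)) y :=
      (Real.hasDerivAt_log hy1).comp y H1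
    have H3 : HasDerivAt (fun t : ℝ => -t) (-1) y := (hasDerivAt_id y).neg
    have H4 : HasDerivAt (fun t : ℝ => t ^ 2 / 2) ((2 * y ^ 1) / 2) y := by
      simpa using (hasDerivAt_pow 2 y).div_const 2
    exact (H3.sub H4).sub H2
  have hmono : MonotoneOn f (Set.Icc 0 x) := by
    apply monotoneOn_of_deriv_nonneg (convex_Icc 0 x)
    · apply ContinuousOn.sub
      · fun_prop
      · apply continuousOn_of_forall_continuousAt
        intro y hy
        simp only [Set.mem_Icc] at hy
        have hy1 : (1:ℝ) - y ≠ 0 := by intro h; nlinarith [hy.2]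
        exact (Real.continuousAt_log hy1).comp (by fun_prop)
    · rw [interior_Icc]
      intro y hy
      exact ((hder y hy).differentiableAt).differentiableWithinAt
    · rw [interior_Icc]
      intro y hy
      rw [(hder y hy).deriv]
      have hy0 : (0:ℝ) < y := hy.1
      have hy1 : (0:ℝ) < 1 - y := by have := hy.2; nlinarith
      have hinv : (1 - y) * (1 - y)⁻¹ = 1 := mul_inv_cancel₀ hy1.ne'
      have h3 : (1:ℝ) + y ≤ (1 - y)⁻¹ := by nlinarith
      nlinarith
  have h01 : (0:ℝ) ∈ Set.Icc (0:ℝ) x := by constructor <;> linarith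
  have hx1 : x ∈ Set.Icc (0:ℝ) x := by constructor <;> linarith
  have hle := hmono h01 hx1 h0
  simp only [hf] at hle
  norm_num at hle
  linarith

/-- `1 - exp (1 - v) ≤ log v` for `v ≥ 1`. -/
lemma aux_log_exp {v : ℝ} (hv : 1 ≤ v) : 1 - Real.exp (1 - v) ≤ Real.log v := by
  rcases eq_or_lt_of_le hv with rfl | hv'
  · simp
  set f : ℝ → ℝ := fun t => Real.log t + Real.exp (1 - t) with hf
  have hder : ∀ t ∈ Set.Ioo (1:ℝ) v, HasDerivAt f (t⁻¹ + Real.exp (1 - t) * (-1)) t := by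
    intro t ht
    have ht0 : (t:ℝ) ≠ 0 := by have := ht.1; intro h; nlinarith
    have H1 : HasDerivAt (fun s : ℝ => 1 - s) (-1) t := (hasDerivAt_id t).const_sub 1
    have H2 : HasDerivAt (fun s : ℝ => Real.exp (1 - s)) (Real.exp (1 - t) * (-1)) t :=
      (Real.hasDerivAt_exp (1 - t)).comp t H1
    exact (Real.hasDerivAt_log ht0).add H2
  have hmono : MonotoneOn f (Set.Icc 1 v) := by
    apply monotoneOn_of_deriv_nonneg (convex_Icc 1 v)
    · apply ContinuousOn.add
      · apply continuousOn_of_forall_continuousAt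
        intro t ht
        simp only [Set.mem_Icc] at ht
        have ht0 : (t:ℝ) ≠ 0 := by intro h; nlinarith [ht.1]
        exact Real.continuousAt_log ht0
      · fun_prop
    · rw [interior_Icc]
      intro t ht
      exact ((hder t ht).differentiableAt).differentiableWithinAt
    · rw [interior_Icc]
      intro t ht
      rw [(hder t ht).deriv]
      have ht1 : (1:ℝ) < t := ht.1
      have ht0 : (0:ℝ) < t := by linarith
      have h6 := Real.add_one_le_exp (t - 1)
      have h7 : Real.exp (t - 1) * Real.exp (1 - t) = 1 := by
        rw [← Real.exp_add]; norm_num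
      have h5 : t * Real.exp (1 - t) ≤ 1 := by nlinarith [Real.exp_pos (1 - t)]
      have hinv : t * t⁻¹ = 1 := mul_inv_cancel₀ ht0.ne'
      nlinarith [Real.exp_pos (1 - t), inv_pos.mpr ht0]
  have h1m : (1:ℝ) ∈ Set.Icc (1:ℝ) v := by constructor <;> linarith
  have hvm : v ∈ Set.Icc (1:ℝ) v := by constructor <;> linarith
  have hle := hmono h1m hvm hv
  simp only [hf] at hle
  norm_num at hle
  linarith

/-- The final numeric contradiction step. -/
lemma aux_final (γ ε X Lv Le Lg R : ℝ) (hγ0 : 0 < γ) (hγ1 : γ < 1) (hε : ε = γ ^ 2 / 4)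
    (hX0 : 0 ≤ X) (hX1 : X ≤ 1)
    (hmain : Lv - Le + (1 - ε) * ((1 - γ) * X) - Lg - 1 ≤ R)
    (hlv : 1 - X ≤ Lv) (hle : Le ≤ ε) (hlg : Lg ≤ -γ - γ ^ 2 / 2) :
    γ ^ 3 / 4 ≤ R := by
  subst hε
  have h1 : (0:ℝ) ≤ γ ^ 2 / 4 + γ - (γ ^ 2 / 4) * γ := by nlinarith
  have h2 : (0:ℝ) ≤ 1 - X := by linarith
  nlinarith [mul_nonneg h1 h2]

set_option maxHeartbeats 1600000 in
/-- Let `γ ∈ (0,1)` and `ε = γ²/4`.  There is `d₀ > 0` such that for all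
`d > d₀`, with `λ = (1−γ)e/d` and `f_Δ a = 1/(1 + λ a^Δ)`, every fixed point
`a* ∈ (0,1]` of `f_{(1−ε)d} ∘ f_{(1+ε)d}` satisfies `a* ≥ 1 − 1/((1+ε)d)`. -/
theorem stmt19 (γ : ℝ) (hγ : γ ∈ Set.Ioo (0 : ℝ) 1) :
    ∃ d₀ : ℝ, 0 < d₀ ∧ ∀ d : ℝ, d₀ < d →
      ∀ astar ∈ Set.Ioc (0 : ℝ) 1,
        1 / (1 + ((1 - γ) * Real.exp 1 / d) *
            (1 / (1 + ((1 - γ) * Real.exp 1 / d) *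
              astar ^ ((1 + γ ^ 2 / 4) * d))) ^ ((1 - γ ^ 2 / 4) * d)) = astar →
        astar ≥ 1 - 1 / ((1 + γ ^ 2 / 4) * d) := by
  obtain ⟨hγ0, hγ1⟩ := hγ
  have hE0 : (0:ℝ) < Real.exp 1 := Real.exp_pos 1
  refine ⟨max 1 (4 * Real.exp 1 ^ 2 / γ ^ 3), lt_of_lt_of_le zero_lt_one (le_max_left _ _), ?_⟩
  intro d hd astar hastar heq
  obtain ⟨ha0, ha1⟩ := hastar
  have hd1 : (1:ℝ) < d := lt_of_le_of_lt (le_max_left _ _) hd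
  have hd0 : (0:ℝ) < d := by linarith
  have hdE : 4 * Real.exp 1 ^ 2 / γ ^ 3 < d := lt_of_le_of_lt (le_max_right _ _) hd
  by_contra hcon
  push_neg at hcon
  -- notation
  set ε : ℝ := γ ^ 2 / 4 with hεdef
  clear_value ε
  have hε0 : 0 < ε := by rw [hεdef]; positivity
  have hγ2 : γ ^ 2 < 1 := by
    have h := mul_lt_mul_of_pos_left hγ1 hγ0
    calc γ ^ 2 = γ * γ := sq γ
    _ < γ * 1 := h
    _ = γ := mul_one γ
    _ < 1 := hγ1
  have hε14 : ε < 1 / 4 := by rw [hεdef]; linarith only [hγ2]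
  have h1γ : (0:ℝ) < 1 - γ := by linarith
  set l : ℝ := (1 - γ) * Real.exp 1 / d with hldef
  clear_value l
  have hl0 : 0 < l := by rw [hldef]; positivity
  set P : ℝ := astar ^ ((1 + ε) * d) with hPdef
  have hP0 : 0 < P := hPdef ▸ Real.rpow_pos_of_pos ha0 _
  have hP1 : P ≤ 1 := hPdef ▸ Real.rpow_le_one ha0.le ha1
    (mul_nonneg (by linarith) hd0.le)
  clear_value P
  set B : ℝ := 1 / (1 + l * P) with hBdef
  clear_value B
  have hden : (0:ℝ) < 1 + l * P := by linarith only [mul_pos hl0 hP0]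
  have hB0 : 0 < B := by rw [hBdef]; exact one_div_pos.mpr hden
  have hB1 : B ≤ 1 := by
    rw [hBdef, div_le_one hden]; linarith only [mul_pos hl0 hP0]
  set Q : ℝ := B ^ ((1 - ε) * d) with hQdef
  have hQ0 : 0 < Q := hQdef ▸ Real.rpow_pos_of_pos hB0 _
  have hQ1 : Q ≤ 1 := hQdef ▸ Real.rpow_le_one hB0.le hB1
    (mul_nonneg (by linarith) hd0.le)
  clear_value Q
  set u : ℝ := l * Q with hudef
  clear_value u
  have hu0 : 0 < u := hudef ▸ mul_pos hl0 hQ0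
  have hul : u ≤ l := by
    calc u = l * Q := hudef
    _ ≤ l * 1 := mul_le_mul_of_nonneg_left hQ1 hl0.le
    _ = l := mul_one l
  have h1u : (0:ℝ) < 1 + u := by linarith
  -- the fixed point equation
  have hau : astar * (1 + u) = 1 := by
    rw [← heq, one_div, inv_mul_cancel₀ h1u.ne']
  have hεd : (0:ℝ) < (1 + ε) * d := mul_pos (by linarith) hd0
  -- u > 1/((1+ε)d)
  have htu : 1 / ((1 + ε) * d) < u := by
    have h1 : 1 / ((1 + ε) * d) < 1 - astar := by linarith
    have h2 : 1 - astar ≤ u := by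
      linarith only [hau,
        mul_nonneg (show (0:ℝ) ≤ 1 - astar by linarith only [ha1]) hu0.le]
    linarith only [h1, h2]
  set v : ℝ := (1 + ε) * d * u with hvdef
  clear_value v
  have hv1 : 1 < v := by
    rw [hvdef]
    calc (1:ℝ) = ((1 + ε) * d) * (1 / ((1 + ε) * d)) := by
          rw [mul_one_div, div_self hεd.ne']
    _ < ((1 + ε) * d) * u := mul_lt_mul_of_pos_left htu hεd
    _ = (1 + ε) * d * u := by ring
  -- (1): P ≥ exp (-v)
  have hloga : -u ≤ Real.log astar := by
    have h1 : Real.log (1 + u) ≤ u := by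
      have := Real.log_le_sub_one_of_pos h1u; linarith
    have h2 : Real.log astar = -Real.log (1 + u) := by
      rw [← heq, one_div, Real.log_inv]
    linarith
  have hP_ge : Real.exp (-v) ≤ P := by
    rw [hPdef, Real.rpow_def_of_pos ha0]
    apply Real.exp_le_exp.mpr
    have h3 := mul_le_mul_of_nonneg_right hloga hεd.le
    rw [hvdef]
    linarith only [h3]
  -- (2): lower bound on log (1 + l*P)
  have hev1 : Real.exp (-v) ≤ 1 := by
    have h := Real.exp_le_exp.mpr (show -v ≤ 0 by linarith)
    simpa using h
  have hev0 : 0 < Real.exp (-v) := Real.exp_pos _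
  have hlog_lower : l * Real.exp (-v) - l ^ 2 ≤ Real.log (1 + l * P) := by
    have hpos3 : (0:ℝ) < 1 + l * Real.exp (-v) := by
      linarith only [mul_pos hl0 hev0]
    have hle3 : 1 + l * Real.exp (-v) ≤ 1 + l * P := by
      linarith only [mul_le_mul_of_nonneg_left hP_ge hl0.le]
    have h3 : Real.log (1 + l * Real.exp (-v)) ≤ Real.log (1 + l * P) :=
      Real.log_le_log hpos3 hle3
    have h4 := aux_log_lb (mul_nonneg hl0.le hev0.le)
    have he2 : Real.exp (-v) ^ 2 ≤ 1 := by
      have h := mul_le_mul hev1 hev1 hev0.le zero_le_one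
      calc Real.exp (-v) ^ 2 = Real.exp (-v) * Real.exp (-v) := sq _
      _ ≤ 1 * 1 := h
      _ = 1 := mul_one 1
    have h5 : (l * Real.exp (-v)) ^ 2 ≤ l ^ 2 := by
      have h5a := mul_le_mul_of_nonneg_left he2 (sq_nonneg l)
      calc (l * Real.exp (-v)) ^ 2 = l ^ 2 * Real.exp (-v) ^ 2 := by ring
      _ ≤ l ^ 2 * 1 := h5a
      _ = l ^ 2 := by ring
    linarith only [h3, h4, h5]
  -- (3): log u expansion
  have hlogu : Real.log u = Real.log l - ((1 - ε) * d) * Real.log (1 + l * P) := by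
    rw [hudef, Real.log_mul hl0.ne' hQ0.ne', hQdef, Real.log_rpow hB0, hBdef,
      one_div, Real.log_inv]
    ring
  -- (4): main inequality on log u
  have hcoef : (0:ℝ) ≤ (1 - ε) * d :=
    mul_nonneg (by linarith only [hε14]) hd0.le
  have hld : l * d = (1 - γ) * Real.exp 1 := by
    rw [hldef]; field_simp
  have hlm : l * ((1 - γ) * Real.exp 1) = ((1 - γ) * Real.exp 1) ^ 2 / d := by
    rw [hldef]; field_simp [hd0.ne']
  have hstar : Real.log u ≤ Real.log l - (1 - ε) * ((1 - γ) * Real.exp 1) * Real.exp (-v)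
      + ((1 - γ) * Real.exp 1) ^ 2 / d := by
    rw [hlogu]
    have h6 := mul_le_mul_of_nonneg_left hlog_lower hcoef
    have h7 : ((1 - ε) * d) * (l * Real.exp (-v) - l ^ 2)
        = (1 - ε) * (l * d) * Real.exp (-v) - (1 - ε) * (l * (l * d)) := by ring
    rw [hld] at h7
    rw [hlm] at h7
    have h8 : (1 - ε) * (((1 - γ) * Real.exp 1) ^ 2 / d) ≤ ((1 - γ) * Real.exp 1) ^ 2 / d := by
      have hmm : (0:ℝ) ≤ ((1 - γ) * Real.exp 1) ^ 2 / d := by positivity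
      linarith only [mul_nonneg hε0.le hmm]
    linarith only [h6, h7, h8]
  -- (5): log expansions
  have hlogv : Real.log v = Real.log (1 + ε) + Real.log d + Real.log u := by
    rw [hvdef, Real.log_mul hεd.ne' hu0.ne',
      Real.log_mul (show (1:ℝ) + ε ≠ 0 by linarith) hd0.ne']
  have hlogl : Real.log l = Real.log ((1 - γ) * Real.exp 1) - Real.log d := by
    rw [hldef, Real.log_div (by positivity) hd0.ne']
  have hlogm : Real.log ((1 - γ) * Real.exp 1) = Real.log (1 - γ) + 1 := by
    rw [Real.log_mul h1γ.ne' hE0.ne', Real.log_exp]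
  -- (6): combined inequality
  have hmain : Real.log v - Real.log (1 + ε)
      + (1 - ε) * ((1 - γ) * Real.exp 1) * Real.exp (-v)
      - Real.log (1 - γ) - 1 ≤ ((1 - γ) * Real.exp 1) ^ 2 / d := by
    linarith only [hstar, hlogv, hlogl, hlogm]
  -- (7): rewrite exp term
  have hexp1v : ((1 - γ) * Real.exp 1) * Real.exp (-v) = (1 - γ) * Real.exp (1 - v) := by
    rw [mul_assoc, ← Real.exp_add, show (1:ℝ) + -v = 1 - v by ring]
  have hmain' : Real.log v - Real.log (1 + ε)
      + (1 - ε) * ((1 - γ) * Real.exp (1 - v))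
      - Real.log (1 - γ) - 1 ≤ ((1 - γ) * Real.exp 1) ^ 2 / d := by
    have : (1 - ε) * (((1 - γ) * Real.exp 1) * Real.exp (-v))
        = (1 - ε) * ((1 - γ) * Real.exp (1 - v)) := by rw [hexp1v]
    linarith only [hmain, this]
  -- (8): the contradiction
  have hlv := aux_log_exp hv1.le
  have hx1 : Real.exp (1 - v) ≤ 1 := by
    have h := Real.exp_le_exp.mpr (show (1:ℝ) - v ≤ 0 by linarith)
    simpa using h
  have hx0 : 0 < Real.exp (1 - v) := Real.exp_pos _
  have hlogeps : Real.log (1 + ε) ≤ ε := by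
    have h := Real.log_le_sub_one_of_pos (show (0:ℝ) < 1 + ε by linarith only [hε0])
    linarith only [h]
  have hlog1γ : Real.log (1 - γ) ≤ -γ - γ ^ 2 / 2 := aux_log_one_sub hγ0.le hγ1
  have key : γ ^ 3 / 4 ≤ ((1 - γ) * Real.exp 1) ^ 2 / d :=
    aux_final γ ε (Real.exp (1 - v)) (Real.log v) (Real.log (1 + ε)) (Real.log (1 - γ))
      (((1 - γ) * Real.exp 1) ^ 2 / d) hγ0 hγ1 hεdef hx0.le hx1 hmain' hlv hlogeps hlog1γ
  have h9 : Real.exp 1 ^ 2 / d < γ ^ 3 / 4 := by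
    rw [div_lt_iff₀ (by positivity : (0:ℝ) < γ ^ 3)] at hdE
    rw [div_lt_div_iff₀ hd0 (by norm_num : (0:ℝ) < 4)]
    linarith only [hdE]
  have h10 : ((1 - γ) * Real.exp 1) ^ 2 ≤ Real.exp 1 ^ 2 := by
    have hg : ((1:ℝ) - γ) * (1 - γ) ≤ 1 * 1 :=
      mul_le_mul (by linarith only [hγ0]) (by linarith only [hγ0]) h1γ.le zero_le_one
    calc ((1 - γ) * Real.exp 1) ^ 2 = ((1 - γ) * (1 - γ)) * Real.exp 1 ^ 2 := by ring
    _ ≤ (1 * 1) * Real.exp 1 ^ 2 := mul_le_mul_of_nonneg_right hg (sq_nonneg _)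
    _ = Real.exp 1 ^ 2 := by ring
  have h11 : ((1 - γ) * Real.exp 1) ^ 2 / d ≤ Real.exp 1 ^ 2 / d := by gcongr
  linarith only [key, h9, h11]
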